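/- Let ε > 0 be sufficiently small and let ρ = 1/2 - ε. Define D⁺ to be the set of squarefree integers d = p₁ ⋯ p_r ≤ x^ρ with primes z ≥ p₁ > p₂ > ⋯ > p_r (for some z ≤ x^(1/2)) satisfying p₁ ⋯ p_{2k-2} · p_{2k-1}³ ≤ x^ρ for all k ≥ 1. Then for any D with x^(1/5) ≤ D ≤ x^ρ, every d ∈ D⁺ can be written as d = d₁ d₂ with positive integers d₁, d₂ such that d₁ ≤ D, d₁ d₂² ≤ x^(1-2ε²)/D, and moreover either d₁ ≥ x^(0.1) or d₂ = 1. -/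

import Mathlib

/-- Greedy factorization lemma: processing the list left to right, put each
element into the "b" bin if it fits under capacity `Y`, else into "a".
The hypothesis says each prefix product times its last element is `≤ M`,
which bounds the "a" bin by `M / Y`. -/
lemma greedy_split (Y M : ℝ) :
    ∀ (L : List ℕ) (a b : ℕ), (∀ p ∈ L, 0 < p) → 0 < a → 0 < b →
      (b : ℝ) ≤ Y → (a = 1 ∨ (a : ℝ) * Y ≤ M) →
      (∀ i : ℕ, ∀ h : i < L.length,
        ((a * b * (L.take (i+1)).prod * L[i] : ℕ) : ℝ) ≤ M) →
      ∃ a' b' : ℕ, 0 < a' ∧ 0 < b' ∧ a' * b' = a * b * L.prod ∧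
        (b' : ℝ) ≤ Y ∧ (a' = 1 ∨ (a' : ℝ) * Y ≤ M) := by
  intro L
  induction L with
  | nil =>
    intro a b _ ha hb hbY hinv _
    exact ⟨a, b, ha, hb, by simp, hbY, hinv⟩
  | cons p L ih =>
    intro a b hpos ha hb hbY hinv hcond
    have hp : 0 < p := hpos p (by simp)
    have hposL : ∀ q ∈ L, 0 < q := fun q hq => hpos q (by simp [hq])
    have hcond' : ∀ (c : ℕ), a * b * p = c →
        ∀ i : ℕ, ∀ h : i < L.length, ((c * (L.take (i+1)).prod * L[i] : ℕ) : ℝ) ≤ M := by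
      intro c hc i h
      have h2 := hcond (i+1) (by simpa using Nat.succ_lt_succ h)
      have : a * b * ((p :: L).take (i+1+1)).prod * ((p :: L)[i+1]'(by simpa using Nat.succ_lt_succ h)) =
          c * (L.take (i+1)).prod * L[i] := by
        rw [List.take_succ_cons, List.prod_cons, List.getElem_cons_succ, ← hc]
        ring
      rwa [this] at h2
    rcases le_or_gt ((b * p : ℕ) : ℝ) Y with h | h
    · obtain ⟨a', b', h1, h2, h3, h4, h5⟩ :=
        ih a (b * p) hposL ha (by positivity) h hinv
          (hcond' (a * (b * p)) (by ring))
      refine ⟨a', b', h1, h2, ?_, h4, h5⟩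
      rw [h3, List.prod_cons]; ring
    · -- skip p : goes into the a-bin
      have h0 := hcond 0 (by simp)
      have he : a * b * ((p :: L).take 1).prod * (p :: L)[0] = a * b * p * p := by
        simp [List.take_succ_cons]
      rw [he] at h0
      have hinv' : (a * p = 1) ∨ ((a * p : ℕ) : ℝ) * Y ≤ M := by
        right
        have hap : (0:ℝ) < (a:ℝ) * p := by positivity
        have : ((a * p : ℕ) : ℝ) * Y < ((a * p : ℕ) : ℝ) * ((b * p : ℕ) : ℝ) := by
          push_cast
          apply mul_lt_mul_of_pos_left _ (by positivity)
          exact_mod_cast h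
        have h2 : ((a * p : ℕ) : ℝ) * ((b * p : ℕ) : ℝ) = ((a * b * p * p : ℕ) : ℝ) := by
          push_cast; ring
        linarith [h0, h2 ▸ this]
      obtain ⟨a', b', h1, h2, h3, h4, h5⟩ :=
        ih (a * p) b hposL (by positivity) hb hbY hinv'
          (hcond' (a * p * b) (by ring))
      refine ⟨a', b', h1, h2, ?_, h4, h5⟩
      rw [h3, List.prod_cons]; ring


set_option maxHeartbeats 1000000 in
/-- Factorization of the support of the upper-bound linear sieve weights
(Lemma on linear sieve weights, case θ = 0, ρ = 1/2 - ε). The squarefree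
integer `d = p₁ ⋯ p_r` is encoded by the strictly decreasing list `L` of its
prime factors. -/
theorem stmt_7 (ε : ℝ) (hε : 0 < ε) (hε' : ε < 1/100) :
    ∃ x₀ : ℝ, ∀ x : ℝ, x₀ ≤ x → ∀ z : ℝ, z ≤ x ^ ((1:ℝ)/2) →
    ∀ L : List ℕ, L ≠ [] → L.Chain' (· > ·) →
      (∀ p ∈ L, Nat.Prime p ∧ (p:ℝ) ≤ z) →
      ((L.prod : ℝ) ≤ x ^ ((1:ℝ)/2 - ε)) →
      (∀ k : ℕ, 2*k < L.length →
        ((L.take (2*k)).prod : ℝ) * ((L.getD (2*k) 1 : ℕ) : ℝ)^3 ≤ x ^ ((1:ℝ)/2 - ε)) →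
    ∀ D : ℝ, x ^ ((1:ℝ)/5) ≤ D → D ≤ x ^ ((1:ℝ)/2 - ε) →
    ∃ d₁ d₂ : ℕ, 0 < d₁ ∧ 0 < d₂ ∧ L.prod = d₁ * d₂ ∧
      (d₁ : ℝ) ≤ D ∧ (d₁ : ℝ) * (d₂ : ℝ)^2 ≤ x ^ (1 - 2*ε^2) / D ∧
      (x ^ (0.1:ℝ) ≤ (d₁ : ℝ) ∨ d₂ = 1) := by
  classical
  refine ⟨1, ?_⟩
  intro x hx z hz L hL hchain hprime hprod hcube D hD1 hD2
  have hx0 : (0:ℝ) < x := by linarith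
  have hmono : ∀ a b : ℝ, a ≤ b → x ^ a ≤ x ^ b :=
    fun a b h => Real.rpow_le_rpow_of_exponent_le hx h
  have hposr : ∀ a : ℝ, (0:ℝ) < x ^ a := fun a => Real.rpow_pos_of_pos hx0 a
  have hone : ∀ a : ℝ, 0 ≤ a → (1:ℝ) ≤ x ^ a := by
    intro a ha
    calc (1:ℝ) = x ^ (0:ℝ) := (Real.rpow_zero x).symm
    _ ≤ x ^ a := hmono 0 a ha
  have hD0 : (0:ℝ) < D := lt_of_lt_of_le (hposr _) hD1
  have hD1' : (1:ℝ) ≤ D := le_trans (hone _ (by norm_num)) hD1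
  have hppos : ∀ p ∈ L, 0 < p := fun p hp => (hprime p hp).1.pos
  have hd0 : 0 < L.prod := List.prod_pos hppos
  have hdR : (0:ℝ) < (L.prod : ℝ) := by exact_mod_cast hd0
  have hMM : x ^ ((1:ℝ)/2 - ε) * x ^ ((1:ℝ)/2 - ε) ≤ x ^ (1 - 2*ε^2) := by
    rw [← Real.rpow_add hx0]
    apply hmono; nlinarith
  have hdD : (L.prod : ℝ) * D ≤ x ^ (1 - 2*ε^2) :=
    le_trans (mul_le_mul hprod hD2 (le_of_lt hD0) (hposr _).le) hMM
  -- the key consequence of the cube conditions: P_i * p_i ≤ x^ρ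
  have hF2 : ∀ i : ℕ, ∀ h : i < L.length,
      (((L.take (i+1)).prod * L[i] : ℕ) : ℝ) ≤ x ^ ((1:ℝ)/2 - ε) := by
    intro i h
    rcases Nat.even_or_odd i with ⟨k, hk⟩ | ⟨k, hk⟩
    · -- i = 2k
      have h2k : 2*k < L.length := by omega
      have hc := hcube k h2k
      rw [List.getD_eq_getElem L 1 h2k] at hc
      have hgeq : L[2*k] = L[i]'h := by congr 1; omega
      rw [hgeq] at hc
      have hpr : (L.take (i+1)).prod = (L.take i).prod * L[i] := by
        have : (L.take (i+1)).prod = (L.take i).prod * L[i]'h := List.prod_take_succ L i h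
        simpa using this
      have htk : L.take (2*k) = L.take i := by congr 1; omega
      rw [htk] at hc
      have h1 : (1:ℝ) ≤ (L[i]'h : ℝ) := by
        have := hppos _ (List.getElem_mem h)
        exact_mod_cast this
      calc (((L.take (i+1)).prod * L[i] : ℕ) : ℝ)
          = ((L.take i).prod : ℝ) * ((L[i]'h : ℕ) : ℝ)^2 := by rw [hpr]; push_cast; ring
        _ ≤ ((L.take i).prod : ℝ) * ((L[i]'h : ℕ) : ℝ)^3 := by
            apply mul_le_mul_of_nonneg_left _ (by positivity)
            exact pow_le_pow_right₀ h1 (by norm_num)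
        _ ≤ x ^ ((1:ℝ)/2 - ε) := hc
    · -- i = 2k+1
      have h2k : 2*k < L.length := by omega
      have hc := hcube k h2k
      rw [List.getD_eq_getElem L 1 h2k] at hc
      have hlt : L[i]'h < L[2*k] := by
        have hp := List.isChain_iff_pairwise.mp hchain
        have := List.pairwise_iff_getElem.mp hp (2*k) i h2k h (by omega)
        exact this
      have hpr1 : (L.take (i+1)).prod = (L.take i).prod * L[i]'h := by
        simpa using List.prod_take_succ L i h
      have hpr2 : (L.take i).prod = (L.take (2*k)).prod * L[2*k] := by
        have : (L.take (2*k+1)).prod = (L.take (2*k)).prod * L[2*k] := by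
          simpa using List.prod_take_succ L (2*k) h2k
        rw [show i = 2*k+1 by omega]; exact this
      have h0 : (0:ℝ) ≤ ((L.take (2*k)).prod : ℝ) := by positivity
      have hle : ((L[i]'h : ℕ) : ℝ) ≤ ((L[2*k] : ℕ) : ℝ) := by exact_mod_cast hlt.le
      have hnn : (0:ℝ) ≤ ((L[i]'h : ℕ) : ℝ) := by positivity
      calc (((L.take (i+1)).prod * L[i] : ℕ) : ℝ)
          = ((L.take (2*k)).prod : ℝ) * (((L[2*k] : ℕ) : ℝ) * ((L[i]'h : ℕ) : ℝ)^2) := by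
            rw [hpr1, hpr2]; push_cast; ring
        _ ≤ ((L.take (2*k)).prod : ℝ) * ((L[2*k] : ℕ) : ℝ)^3 := by
            apply mul_le_mul_of_nonneg_left _ h0
            have h2 : ((L[i]'h : ℕ) : ℝ)^2 ≤ ((L[2*k] : ℕ) : ℝ)^2 := by
              apply pow_le_pow_left₀ hnn hle
            calc ((L[2*k] : ℕ) : ℝ) * ((L[i]'h : ℕ) : ℝ)^2
                ≤ ((L[2*k] : ℕ) : ℝ) * ((L[2*k] : ℕ) : ℝ)^2 := by
                  apply mul_le_mul_of_nonneg_left h2 (by positivity)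
              _ = ((L[2*k] : ℕ) : ℝ)^3 := by ring
        _ ≤ x ^ ((1:ℝ)/2 - ε) := hc
  -- goal reduction helper
  have hgoal : ∀ d₁ d₂ : ℕ, d₁ * d₂ = L.prod →
      (L.prod : ℝ) * (d₂ : ℝ) * D ≤ x ^ (1 - 2*ε^2) →
      (d₁ : ℝ) * (d₂ : ℝ)^2 ≤ x ^ (1 - 2*ε^2) / D := by
    intro d₁ d₂ h12 hineq
    have hR : (d₁ : ℝ) * (d₂ : ℝ) = (L.prod : ℝ) := by exact_mod_cast h12
    rw [le_div_iff₀ hD0]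
    calc (d₁ : ℝ) * (d₂ : ℝ)^2 * D = ((d₁ : ℝ) * (d₂ : ℝ)) * (d₂ : ℝ) * D := by ring
      _ = (L.prod : ℝ) * (d₂ : ℝ) * D := by rw [hR]
      _ ≤ x ^ (1 - 2*ε^2) := hineq
  by_cases hcase : (L.prod : ℝ) ≤ D
  · refine ⟨L.prod, 1, hd0, one_pos, (mul_one _).symm, hcase, ?_, Or.inr rfl⟩
    apply hgoal L.prod 1 (mul_one _)
    calc (L.prod : ℝ) * ((1:ℕ) : ℝ) * D = (L.prod : ℝ) * D := by push_cast; ring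
      _ ≤ x ^ (1 - 2*ε^2) := hdD
  push_neg at hcase
  by_cases h2a : x ^ ((1:ℝ)/2 - ε + 0.1) ≤ (L.prod : ℝ) * D
  · -- greedy case
    set M := x ^ ((1:ℝ)/2 - ε) with hMdef
    set X := x ^ (1 - 2*ε^2) / ((L.prod : ℝ) * D) with hXdef
    set Z := (L.prod : ℝ) / x ^ (0.1:ℝ) with hZdef
    have hY1 : (1:ℝ) ≤ min X Z := by
      apply le_min
      · rw [hXdef, le_div_iff₀ (by positivity)]
        simpa using hdD
      · rw [hZdef, le_div_iff₀ (hposr _)]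
        have : x ^ (0.1:ℝ) ≤ D := le_trans (hmono _ _ (by norm_num)) hD1
        calc (1:ℝ) * x ^ (0.1:ℝ) = x ^ (0.1:ℝ) := one_mul _
          _ ≤ D := this
          _ ≤ (L.prod : ℝ) := hcase.le
    obtain ⟨a, b, ha, hb, hab, hbY, hinv⟩ :=
      greedy_split (min X Z) M L 1 1 hppos one_pos one_pos (by simpa using hY1)
        (Or.inl rfl) (fun i h => by simpa using hF2 i h)
    simp only [one_mul] at hab
    have habR : (a : ℝ) * (b : ℝ) = (L.prod : ℝ) := by exact_mod_cast hab
    have hbR : (0:ℝ) < (b:ℝ) := by exact_mod_cast hb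
    -- x^0.1 ≤ a
    have hxa : x ^ (0.1:ℝ) ≤ (a : ℝ) := by
      have h1 : (b : ℝ) ≤ Z := le_trans hbY (min_le_right _ _)
      rw [hZdef, le_div_iff₀ (hposr _)] at h1
      rw [← habR] at h1
      exact (mul_le_mul_iff_of_pos_right hbR).mp (by linarith [h1])
    -- a ≤ D
    have haD : (a : ℝ) ≤ D := by
      rcases hinv with h1 | h1
      · rw [h1]; exact_mod_cast hD1'
      · have hMD : M / D ≤ min X Z := by
          apply le_min
          · rw [hXdef, div_le_div_iff₀ hD0 (by positivity)]
            calc M * ((L.prod : ℝ) * D) = (M * (L.prod : ℝ)) * D := by ring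
              _ ≤ (x ^ (1 - 2*ε^2)) * D := by
                  apply mul_le_mul_of_nonneg_right _ hD0.le
                  calc M * (L.prod : ℝ) ≤ M * M := by
                        apply mul_le_mul_of_nonneg_left hprod (hposr _).le
                    _ ≤ x ^ (1 - 2*ε^2) := hMM
          · rw [hZdef, div_le_div_iff₀ hD0 (hposr _)]
            calc M * x ^ (0.1:ℝ) = x ^ ((1:ℝ)/2 - ε + 0.1) := by
                  rw [hMdef, ← Real.rpow_add hx0]
              _ ≤ (L.prod : ℝ) * D := h2a
        have h2 : (a : ℝ) * (M / D) ≤ M := le_trans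
          (mul_le_mul_of_nonneg_left hMD (by positivity)) h1
        have h3 : (a:ℝ) * M ≤ M * D := by
          rw [← mul_div_assoc] at h2
          exact (div_le_iff₀ hD0).mp h2
        have hM0 : (0:ℝ) < M := hposr _
        nlinarith
    refine ⟨a, b, ha, hb, hab.symm, haD, ?_, Or.inl hxa⟩
    apply hgoal a b hab
    have h1 : (b : ℝ) ≤ X := le_trans hbY (min_le_left _ _)
    rw [hXdef, le_div_iff₀ (by positivity)] at h1
    calc (L.prod : ℝ) * (b : ℝ) * D = (b : ℝ) * ((L.prod : ℝ) * D) := by ring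
      _ ≤ x ^ (1 - 2*ε^2) := h1
  · -- small d*D case: find a divisor in [x^0.1, D]
    push_neg at h2a
    -- key: d * d * D ≤ x^(1-2ε²)
    have hdlt : (L.prod : ℝ) * x ^ ((1:ℝ)/5) ≤ x ^ ((1:ℝ)/2 - ε + 0.1) :=
      le_trans (mul_le_mul_of_nonneg_left hD1 hdR.le) h2a.le
    have h5 : (0:ℝ) < x ^ ((1:ℝ)/5) := hposr _
    have hkey : (L.prod : ℝ) * (L.prod : ℝ) * D ≤ x ^ (1 - 2*ε^2) := by
      have hA : ((L.prod : ℝ) * (L.prod : ℝ) * D) * x ^ ((1:ℝ)/5) ≤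
          x ^ ((1:ℝ)/2 - ε + 0.1) * x ^ ((1:ℝ)/2 - ε + 0.1) := by
        calc ((L.prod : ℝ) * (L.prod : ℝ) * D) * x ^ ((1:ℝ)/5)
            = ((L.prod : ℝ) * x ^ ((1:ℝ)/5)) * ((L.prod : ℝ) * D) := by ring
          _ ≤ x ^ ((1:ℝ)/2 - ε + 0.1) * x ^ ((1:ℝ)/2 - ε + 0.1) :=
              mul_le_mul hdlt h2a.le (by positivity) (hposr _).le
      calc (L.prod : ℝ) * (L.prod : ℝ) * D
          ≤ x ^ ((1:ℝ)/2 - ε + 0.1) * x ^ ((1:ℝ)/2 - ε + 0.1) / x ^ ((1:ℝ)/5) :=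
            (le_div_iff₀ h5).mpr hA
        _ = x ^ ((1:ℝ)/2 - ε + 0.1 + ((1:ℝ)/2 - ε + 0.1) - (1:ℝ)/5) := by
            rw [← Real.rpow_add hx0, ← Real.rpow_sub hx0]
        _ ≤ x ^ (1 - 2*ε^2) := hmono _ _ (by nlinarith)
    have hc2 : ∀ c : ℕ, c ≤ L.prod → (L.prod : ℝ) * (c : ℝ) * D ≤ x ^ (1 - 2*ε^2) := by
      intro c hc
      refine le_trans ?_ hkey
      have : (c:ℝ) ≤ (L.prod : ℝ) := by exact_mod_cast hc
      apply mul_le_mul_of_nonneg_right (mul_le_mul_of_nonneg_left this hdR.le) hD0.le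
    have hex : ∃ i, ((L.drop i).prod : ℝ) ≤ D :=
      ⟨L.length, by rw [List.drop_length]; simpa using hD1'⟩
    have hi : ((L.drop (Nat.find hex)).prod : ℝ) ≤ D := Nat.find_spec hex
    have hi0 : Nat.find hex ≠ 0 := by
      intro h0
      rw [h0, List.drop_zero] at hi
      linarith
    obtain ⟨j, hj⟩ : ∃ j, Nat.find hex = j + 1 := ⟨Nat.find hex - 1, by omega⟩
    have hjmin := Nat.find_min hex (m := j) (by omega)
    push_neg at hjmin
    have hjlen : j < L.length := by
      by_contra hcon
      push_neg at hcon
      rw [List.drop_eq_nil_of_le hcon] at hjmin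
      simp at hjmin
      linarith
    have hdropj : L.drop j = L[j] :: L.drop (j+1) := List.drop_eq_getElem_cons hjlen
    have hi' : ((L.drop (j+1)).prod : ℝ) ≤ D := by rw [hj] at hi; exact hi
    have hjprod : (L.drop j).prod = L[j] * (L.drop (j+1)).prod := by
      rw [hdropj, List.prod_cons]
    have ht0 : 0 < (L.drop (j+1)).prod :=
      List.prod_pos (fun q hq => hppos q (List.mem_of_mem_drop hq))
    have htR : (0:ℝ) < ((L.drop (j+1)).prod : ℝ) := by exact_mod_cast ht0
    have hjmin' : D < (L[j] : ℝ) * ((L.drop (j+1)).prod : ℝ) := by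
      have hjm2 := hjmin
      rw [hjprod] at hjm2
      exact_mod_cast hjm2
    by_cases hT : x ^ (0.1:ℝ) ≤ ((L.drop (j+1)).prod : ℝ)
    · -- the suffix product is a good d₁
      have htake0 : 0 < (L.take (j+1)).prod :=
        List.prod_pos (fun q hq => hppos q (List.mem_of_mem_take hq))
      have hfact : L.prod = (L.drop (j+1)).prod * (L.take (j+1)).prod := by
        rw [← List.prod_take_mul_prod_drop L (j+1)]; ring
      refine ⟨(L.drop (j+1)).prod, (L.take (j+1)).prod, ht0, htake0, hfact, hi', ?_,
        Or.inl hT⟩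
      apply hgoal _ _ hfact.symm
      apply hc2
      exact Nat.le_of_dvd hd0 ⟨(L.drop (j+1)).prod, by rw [hfact]; ring⟩
    · -- the single prime L[j] is a good d₁
      push_neg at hT
      have hpdvd : L[j] ∣ L.prod := List.dvd_prod (List.getElem_mem hjlen)
      have hpj0 : 0 < L[j] := hppos _ (List.getElem_mem hjlen)
      have hq0 : 0 < L.prod / L[j] := Nat.div_pos (Nat.le_of_dvd hd0 hpdvd) hpj0
      have heq : L.prod = L[j] * (L.prod / L[j]) := (Nat.mul_div_cancel' hpdvd).symm
      have hpjR : (0:ℝ) < (L[j] : ℝ) := by exact_mod_cast hpj0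
      -- x^0.1 ≤ L[j]
      have hx01 : x ^ (0.1:ℝ) ≤ (L[j] : ℝ) := by
        have h1 : x ^ (0.1:ℝ) * x ^ (0.1:ℝ) = x ^ ((1:ℝ)/5) := by
          rw [← Real.rpow_add hx0]; norm_num
        have h2 : x ^ (0.1:ℝ) * x ^ (0.1:ℝ) < (L[j] : ℝ) * x ^ (0.1:ℝ) := by
          calc x ^ (0.1:ℝ) * x ^ (0.1:ℝ) = x ^ ((1:ℝ)/5) := h1
            _ ≤ D := hD1
            _ < (L[j] : ℝ) * ((L.drop (j+1)).prod : ℝ) := hjmin'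
            _ ≤ (L[j] : ℝ) * x ^ (0.1:ℝ) :=
                mul_le_mul_of_nonneg_left hT.le hpjR.le
        exact ((mul_lt_mul_iff_of_pos_right (hposr _)).mp h2).le
      -- L[j] ≤ D
      have hlen0 : 0 < L.length := List.length_pos_iff.mpr hL
      have hcube0 := hcube 0 (by simpa using hlen0)
      rw [show 2*0 = 0 by rfl, List.getD_eq_getElem L 1 hlen0] at hcube0
      simp only [List.take_zero, List.prod_nil, Nat.cast_one, one_mul] at hcube0
      have hj0 : (L[j] : ℝ) ≤ (L[0] : ℝ) := by
        rcases Nat.eq_zero_or_pos j with h0 | h0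
        · subst h0; exact le_rfl
        · have hp := List.isChain_iff_pairwise.mp hchain
          have hlt : L[j] < L[0] := List.pairwise_iff_getElem.mp hp 0 j hlen0 hjlen h0
          exact_mod_cast hlt.le
      have hcubej : (L[j] : ℝ)^3 ≤ x ^ ((1:ℝ)/2 - ε) :=
        le_trans (pow_le_pow_left₀ hpjR.le hj0 3) hcube0
      have hD3 : x ^ ((1:ℝ)/2 - ε) ≤ D^3 := by
        calc x ^ ((1:ℝ)/2 - ε) ≤ x ^ ((1:ℝ)/5 * 3) := hmono _ _ (by norm_num; linarith)
          _ = (x ^ ((1:ℝ)/5)) ^ (3:ℕ) := by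
              rw [← Real.rpow_natCast (x ^ ((1:ℝ)/5)) 3, ← Real.rpow_mul hx0.le]
              norm_num
          _ ≤ D^3 := pow_le_pow_left₀ h5.le hD1 3
      have hjD : (L[j] : ℝ) ≤ D := by
        by_contra hcon
        push_neg at hcon
        have : D^3 < (L[j] : ℝ)^3 := pow_lt_pow_left₀ hcon hD0.le (by norm_num)
        linarith
      refine ⟨L[j], L.prod / L[j], hpj0, hq0, heq, hjD, ?_, Or.inl hx01⟩
      apply hgoal _ _ heq.symm
      exact hc2 _ (Nat.div_le_self _ _)
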